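/- Let M be an n×n integer matrix, v a nonzero vector in Z^n, and suppose the span of {v, Mv, ..., M^{n-1}v} has dimension r < n. Then there exists a unimodular integer matrix B (det B = ±1) such that Bv = (x_1, ..., x_r, 0, ..., 0)^t for some integers x_i, and BMB^{-1} is block upper triangular of the form [[M_1, C],[0, M_2]] with M_1 an r×r integer matrix, M_2 an (n-r)×(n-r) integer matrix, and C an r×(n-r) integer matrix. -/

import Mathlib

open Matrix

noncomputable def coeL (n : ℕ) : (Fin n → ℤ) →ₗ[ℤ] (Fin n → ℚ) :=
  LinearMap.compLeft (Algebra.linearMap ℤ ℚ) (Fin n)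

lemma coeL_apply {n : ℕ} (x : Fin n → ℤ) (i : Fin n) : coeL n x i = (x i : ℚ) := rfl

lemma coeL_injective (n : ℕ) : Function.Injective (coeL n) := by
  intro x y h
  funext i
  have h2 := congrFun h i
  rw [coeL_apply, coeL_apply] at h2
  exact_mod_cast h2

lemma coeL_mulVec {n : ℕ} (A : Matrix (Fin n) (Fin n) ℤ) (x : Fin n → ℤ) :
    coeL n (A *ᵥ x) = (A.map ((↑) : ℤ → ℚ)) *ᵥ (coeL n x) := by
  funext i
  simp only [coeL_apply, mulVec, dotProduct, Matrix.map_apply]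
  push_cast
  rfl

lemma coeL_pow_mulVec {n : ℕ} (A : Matrix (Fin n) (Fin n) ℤ) (j : ℕ) (x : Fin n → ℤ) :
    coeL n ((A ^ j) *ᵥ x) = ((A.map ((↑) : ℤ → ℚ)) ^ j) *ᵥ (coeL n x) := by
  rw [coeL_mulVec]
  have : (A ^ j).map ((↑) : ℤ → ℚ) = (A.map ((↑) : ℤ → ℚ)) ^ j := by
    have h := map_pow ((Int.castRingHom ℚ).mapMatrix) A j
    simpa [RingHom.mapMatrix_apply] using h
  rw [this]


/-- If `M ∈ M_n(ℤ)`, `v ∈ ℤ^n \ {0}` and the span of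
`{v, Mv, …, M^{n-1}v}` over `ℚ` has dimension `r < n`, then there is a unimodular
integer matrix `B` with `Bv = (x_1, …, x_r, 0, …, 0)ᵗ` and `B M B⁻¹` block upper
triangular with an `r × r` block `M_1`, an `(n-r) × (n-r)` block `M_2` and an
`r × (n-r)` block `C`. -/
theorem stmt_1 (n r : ℕ) (M : Matrix (Fin n) (Fin n) ℤ)
    (v : Fin n → ℤ) (hv : v ≠ 0) (hrn : r < n)
    (hrank : Module.finrank ℚ (Submodule.span ℚ
      (Set.range (fun j : Fin n => fun i : Fin n => (((M ^ (j : ℕ)) *ᵥ v) i : ℚ)))) = r) :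
    ∃ B B' : Matrix (Fin n) (Fin n) ℤ,
      (B.det = 1 ∨ B.det = -1) ∧ B * B' = 1 ∧ B' * B = 1 ∧
      (∀ i : Fin n, r ≤ (i : ℕ) → (B *ᵥ v) i = 0) ∧
      (∀ i j : Fin n, r ≤ (i : ℕ) → (j : ℕ) < r → (B * M * B') i j = 0) := by
  classical
  set Mq : Matrix (Fin n) (Fin n) ℚ := M.map ((↑) : ℤ → ℚ) with hMq
  set g : Fin n → (Fin n → ℚ) := fun j => fun i => (((M ^ (j : ℕ)) *ᵥ v) i : ℚ) with hg
  set W : Submodule ℚ (Fin n → ℚ) := Submodule.span ℚ (Set.range g) with hW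
  set L : Submodule ℤ (Fin n → ℤ) := (W.restrictScalars ℤ).comap (coeL n) with hL
  have hgj : ∀ j : Fin n, g j = (Mq ^ (j : ℕ)) *ᵥ coeL n v := by
    intro j
    funext i
    rw [← coeL_pow_mulVec]
    rfl
  have hmemL : ∀ x : Fin n → ℤ, x ∈ L ↔ coeL n x ∈ W := fun x => Iff.rfl
  -- Cayley-Hamilton
  have hCH : ∃ c : Fin n → ℚ, Mq ^ n = ∑ i : Fin n, c i • Mq ^ (i : ℕ) := by
    have hp := Matrix.aeval_self_charpoly Mq
    set p := Mq.charpoly with hpdef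
    have hmon : p.Monic := Mq.charpoly_monic
    have hdeg : p.natDegree = n := by
      rw [hpdef, Mq.charpoly_natDegree_eq_dim, Fintype.card_fin]
    set q : Polynomial ℚ := Polynomial.X ^ n - p with hq
    have hqdeg : q.natDegree < n := by
      rcases eq_or_ne q 0 with h | h
      · simpa [h] using lt_of_le_of_lt (Nat.zero_le r) hrn
      · rw [Polynomial.natDegree_lt_iff_degree_lt h]
        have h1 : (Polynomial.X ^ n : Polynomial ℚ).degree = p.degree := by
          rw [Polynomial.degree_X_pow, Polynomial.degree_eq_natDegree hmon.ne_zero, hdeg]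
        have h2 := Polynomial.degree_sub_lt h1 (pow_ne_zero n Polynomial.X_ne_zero) (by
          rw [Polynomial.leadingCoeff_X_pow, hmon.leadingCoeff])
        rw [Polynomial.degree_X_pow] at h2
        exact h2
    refine ⟨fun i => q.coeff i, ?_⟩
    have h2 : (Polynomial.aeval Mq) q = ∑ i ∈ Finset.range n, q.coeff i • Mq ^ i :=
      Polynomial.aeval_eq_sum_range' hqdeg Mq
    have h3 : (Polynomial.aeval Mq) q = Mq ^ n := by
      rw [hq, map_sub, hp, sub_zero, map_pow, Polynomial.aeval_X]
    rw [← h3, h2, ← Fin.sum_univ_eq_sum_range]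
  -- W is invariant under Mq
  have hWinv : ∀ x ∈ W, Mq *ᵥ x ∈ W := by
    have hgm : ∀ j : Fin n, g j ∈ W := fun j => Submodule.subset_span ⟨j, rfl⟩
    have hpowmem : ∀ j : ℕ, j ≤ n → (Mq ^ j) *ᵥ coeL n v ∈ W := by
      intro j hj
      rcases lt_or_eq_of_le hj with h | h
      · rw [← hgj ⟨j, h⟩]; exact hgm _
      · obtain ⟨c, hc⟩ := hCH
        rw [h, hc]
        have hs : (∑ i : Fin n, c i • Mq ^ (i : ℕ)) *ᵥ coeL n v
            = ∑ i : Fin n, c i • ((Mq ^ (i : ℕ)) *ᵥ coeL n v) := by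
          induction (Finset.univ : Finset (Fin n)) using Finset.cons_induction with
          | empty => simp
          | cons a s ha ih =>
            rw [Finset.sum_cons, Finset.sum_cons, Matrix.add_mulVec, ih, Matrix.smul_mulVec]
        rw [hs]
        exact Submodule.sum_mem _ fun i _ =>
          Submodule.smul_mem _ _ (by rw [← hgj i]; exact hgm i)
    intro x hx
    induction hx using Submodule.span_induction with
    | mem y hy =>
      obtain ⟨j, rfl⟩ := hy
      rw [hgj j, Matrix.mulVec_mulVec, ← pow_succ']
      exact hpowmem _ (Nat.succ_le_of_lt j.isLt)
    | zero => simp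
    | add a b _ _ ha hb => rw [Matrix.mulVec_add]; exact Submodule.add_mem _ ha hb
    | smul c a _ ha => rw [Matrix.mulVec_smul]; exact Submodule.smul_mem _ _ ha
  -- L is invariant under M
  have hML : ∀ x ∈ L, M *ᵥ x ∈ L := by
    intro x hx
    rw [hmemL] at hx ⊢
    rw [coeL_mulVec]
    exact hWinv _ hx
  have hvL : ∀ j : Fin n, (M ^ (j : ℕ)) *ᵥ v ∈ L := by
    intro j
    rw [hmemL, coeL_pow_mulVec, ← hgj j]
    exact Submodule.subset_span ⟨j, rfl⟩
  have hv0L : v ∈ L := by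
    have := hvL ⟨0, lt_of_le_of_lt (Nat.zero_le r) hrn⟩
    simpa using this
  obtain ⟨m, snf⟩ := L.smithNormalForm (Pi.basisFun ℤ (Fin n))
  have hmr : m = r := by
    set u : Fin m → (Fin n → ℚ) := fun i => coeL n ((snf.bN i : Fin n → ℤ)) with hu
    have hindZ : LinearIndependent ℤ u := by
      have h1 : LinearIndependent ℤ (fun i => ((snf.bN i : Fin n → ℤ))) :=
        snf.bN.linearIndependent.map' L.subtype (Submodule.ker_subtype L)
      exact h1.map' (coeL n) (LinearMap.ker_eq_bot.mpr (coeL_injective n))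
    have hind : LinearIndependent ℚ u := (LinearIndependent.iff_fractionRing ℤ ℚ).mp hindZ
    have hspan : Submodule.span ℚ (Set.range u) = W := by
      apply le_antisymm
      · rw [Submodule.span_le]
        rintro _ ⟨i, rfl⟩
        exact (snf.bN i).2
      · rw [hW, Submodule.span_le]
        rintro _ ⟨j, rfl⟩
        have key : ∀ x : L, coeL n (x : Fin n → ℤ) ∈ Submodule.span ℚ (Set.range u) := by
          intro x
          have hx := snf.bN.sum_repr x
          have hcx : coeL n (x : Fin n → ℤ) = ∑ i, (snf.bN.repr x i) • u i := by
            conv_lhs => rw [← hx]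
            have h1 : ((∑ i, (snf.bN.repr x) i • snf.bN i : L) : Fin n → ℤ)
                = ∑ i, (snf.bN.repr x) i • (snf.bN i : Fin n → ℤ) := by
              simp only [Submodule.coe_sum, Submodule.coe_smul]
            rw [h1, map_sum]
            exact Finset.sum_congr rfl fun i _ => map_smul (coeL n) _ _
          rw [hcx]
          exact Submodule.sum_mem _ fun i _ =>
            Submodule.smul_of_tower_mem _ _ (Submodule.subset_span ⟨i, rfl⟩)
        have hgc : g j = coeL n ((M ^ (j : ℕ)) *ᵥ v) := by funext i; rfl
        rw [hgc]
        exact key ⟨_, hvL j⟩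
    have hfr := finrank_span_eq_card hind
    rw [hspan, hrank, Fintype.card_fin] at hfr
    exact hfr.symm
  subst hmr
  set S : Set (Fin n) := Set.range snf.f with hS
  let e1 : Fin m ≃ ↥S := Equiv.ofInjective snf.f snf.f.injective
  have hcardS : Fintype.card S = m :=
    (Fintype.card_congr e1.symm).trans (Fintype.card_fin m)
  have hcardSc : Fintype.card (↥Sᶜ) = n - m := by
    rw [Fintype.card_compl_set, hcardS, Fintype.card_fin]
  let e2 : Fin (n - m) ≃ ↥Sᶜ := (Fintype.equivFinOfCardEq hcardSc).symm
  have hradd : n = m + (n - m) := (Nat.add_sub_cancel' hrn.le).symm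
  let e : Fin n ≃ Fin n :=
    (((finCongr hradd).trans finSumFinEquiv.symm).trans (Equiv.sumCongr e1 e2)).trans
      (Equiv.Set.sumCompl S)
  have heS : ∀ i : Fin n, (i : ℕ) < m → e i ∈ S := by
    intro i hi
    have h1 : finCongr hradd i = Fin.castAdd (n - m) ⟨(i : ℕ), hi⟩ := by
      ext; simp
    show (Equiv.Set.sumCompl S) ((Equiv.sumCongr e1 e2) (finSumFinEquiv.symm (finCongr hradd i))) ∈ S
    rw [h1, finSumFinEquiv_symm_apply_castAdd]
    simp only [Equiv.sumCongr_apply, Sum.map_inl, Equiv.Set.sumCompl_apply_inl]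
    exact (e1 ⟨(i : ℕ), hi⟩).2
  have heSc : ∀ i : Fin n, m ≤ (i : ℕ) → e i ∉ S := by
    intro i hi
    have h1 : finCongr hradd i = Fin.natAdd m ⟨(i : ℕ) - m, by omega⟩ := by
      ext; simp; omega
    show (Equiv.Set.sumCompl S) ((Equiv.sumCongr e1 e2) (finSumFinEquiv.symm (finCongr hradd i))) ∉ S
    rw [h1, finSumFinEquiv_symm_apply_natAdd]
    simp only [Equiv.sumCongr_apply, Sum.map_inr, Equiv.Set.sumCompl_apply_inr]
    exact (e2 ⟨(i : ℕ) - m, by omega⟩).2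
  let b' : Module.Basis (Fin n) ℤ (Fin n → ℤ) := snf.bM.reindex e.symm
  have hb'repr : ∀ (x : Fin n → ℤ) (i : Fin n), b'.repr x i = snf.bM.repr x (e i) := by
    intro x i
    rw [Module.Basis.repr_reindex_apply, Equiv.symm_symm]
  set std := Pi.basisFun ℤ (Fin n) with hstd
  have hBB' : b'.toMatrix std * std.toMatrix b' = 1 := Module.Basis.toMatrix_mul_toMatrix_flip b' std
  have hB'B : std.toMatrix b' * b'.toMatrix std = 1 := Module.Basis.toMatrix_mul_toMatrix_flip std b'
  have hdet : (b'.toMatrix std).det = 1 ∨ (b'.toMatrix std).det = -1 := by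
    have h1 : (b'.toMatrix std).det * (std.toMatrix b').det = 1 := by
      rw [← Matrix.det_mul, hBB', Matrix.det_one]
    exact Int.isUnit_iff.mp (IsUnit.of_mul_eq_one _ h1)
  have hBv : ∀ i : Fin n, m ≤ (i : ℕ) → ((b'.toMatrix std) *ᵥ v) i = 0 := by
    intro i hi
    have h1 : (b'.toMatrix std) *ᵥ ⇑(std.repr v) = ⇑(b'.repr v) :=
      Module.Basis.toMatrix_mulVec_repr std b' v
    have h2 : ⇑(std.repr v) = v := by
      funext k; simp [hstd]
    rw [h2] at h1
    rw [h1, hb'repr]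
    exact snf.repr_eq_zero_of_notMem_range (⟨v, hv0L⟩ : L) (heSc i hi)
  have hM : LinearMap.toMatrix std std (Matrix.mulVecLin M) = M := by
    rw [hstd, LinearMap.toMatrix_eq_toMatrix', ← Matrix.toLin'_apply', LinearMap.toMatrix'_toLin']
  have hBMB' : b'.toMatrix std * M * std.toMatrix b'
      = LinearMap.toMatrix b' b' (Matrix.mulVecLin M) := by
    conv_lhs => rw [← hM]
    exact basis_toMatrix_mul_linearMap_toMatrix_mul_basis_toMatrix b' std b' std (Matrix.mulVecLin M)
  have htri : ∀ i j : Fin n, m ≤ (i : ℕ) → (j : ℕ) < m →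
      (b'.toMatrix std * M * std.toMatrix b') i j = 0 := by
    intro i j hi hj
    rw [hBMB', LinearMap.toMatrix_apply]
    rw [Matrix.mulVecLin_apply, hb'repr]
    have hbj : b' j = snf.bM (e j) := by
      show (snf.bM.reindex e.symm) j = snf.bM (e j)
      rw [Module.Basis.reindex_apply, Equiv.symm_symm]
    obtain ⟨k, hk⟩ := heS j hj
    have hak : snf.a k ≠ 0 := by
      intro h0
      have hz := snf.snf k
      rw [h0, zero_smul] at hz
      exact (snf.bN.ne_zero k) (ZeroMemClass.coe_eq_zero.mp hz)
    have hwL : M *ᵥ ((snf.bN k : Fin n → ℤ)) ∈ L := hML _ (snf.bN k).2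
    have h2 : snf.a k • (M *ᵥ snf.bM (snf.f k)) = M *ᵥ (snf.bN k : Fin n → ℤ) := by
      rw [snf.snf k, Matrix.mulVec_smul]
    have h3 : snf.bM.repr (M *ᵥ (snf.bN k : Fin n → ℤ)) (e i) = 0 :=
      snf.repr_eq_zero_of_notMem_range ⟨_, hwL⟩ (heSc i hi)
    rw [← h2, _root_.map_smul] at h3
    have h4 : snf.a k * snf.bM.repr (M *ᵥ snf.bM (snf.f k)) (e i) = 0 := by
      simpa using h3
    rcases mul_eq_zero.mp h4 with h | h
    · exact absurd h hak
    · rw [hbj, ← hk]; exact h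
  exact ⟨b'.toMatrix std, std.toMatrix b', hdet, hBB', hB'B, hBv, htri⟩
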